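/- Let A be a compact contraction on a separable Hilbert space having 1 as an eigenvalue. Then the geometric and algebraic multiplicities of the eigenvalue 1 coincide, i.e. Ran(A−1) ∩ Ker(A−1) = {0}. -/

import Mathlib

/-- Lemma 3.3(ii): for a compact contraction `A` with eigenvalue `1`, the geometric and
algebraic multiplicities of the eigenvalue `1` coincide, i.e.
`Ran(A - 1) ∩ Ker(A - 1) = {0}`. -/
theorem compact_contraction_eigenvalue_one_semisimple
    {H : Type*} [NormedAddCommGroup H] [InnerProductSpace ℂ H]
    [CompleteSpace H] [TopologicalSpace.SeparableSpace H]
    (A : H →L[ℂ] H) (hA : IsCompactOperator (⇑A)) (hnorm : ‖A‖ ≤ 1)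
    (heig : ∃ c : H, c ≠ 0 ∧ A c = c) :
    ∀ c : H, A c = c → (∃ x : H, A x - x = c) → c = 0 := by
  intro c hc hx
  obtain ⟨x, hx⟩ := hx
  set B := ContinuousLinearMap.adjoint A with hB
  -- A* c = c
  have hBnorm : ‖B c‖ ≤ ‖c‖ := by
    calc ‖B c‖ ≤ ‖B‖ * ‖c‖ := B.le_opNorm c
    _ ≤ 1 * ‖c‖ := by
        have : ‖B‖ = ‖A‖ := LinearIsometryEquiv.norm_map ContinuousLinearMap.adjoint A
        nlinarith [norm_nonneg c]
    _ = ‖c‖ := one_mul _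
  have hinner : inner ℂ (B c) c = (‖c‖ : ℂ) ^ 2 := by
    rw [hB, ContinuousLinearMap.adjoint_inner_left, hc, inner_self_eq_norm_sq_to_K]; norm_cast
  have hre : RCLike.re (inner ℂ (B c) c : ℂ) = ‖c‖ ^ 2 := by
    rw [hinner]; norm_cast
  have hsq : ‖B c - c‖ ^ 2 = ‖B c‖ ^ 2 - 2 * RCLike.re (inner ℂ (B c) c : ℂ) + ‖c‖ ^ 2 :=
    norm_sub_sq (𝕜 := ℂ) _ _
  have hzero : ‖B c - c‖ ^ 2 ≤ 0 := by
    rw [hsq, hre]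
    nlinarith [norm_nonneg (B c), norm_nonneg c]
  have hBc : B c = c := by
    have : ‖B c - c‖ = 0 := by nlinarith [norm_nonneg (B c - c), sq_nonneg ‖B c - c‖]
    rwa [norm_eq_zero, sub_eq_zero] at this
  -- conclude
  have : (inner ℂ c c : ℂ) = 0 := by
    calc (inner ℂ c c : ℂ) = inner ℂ (A x - x) c := by rw [hx]
    _ = (inner ℂ (A x) c : ℂ) - inner ℂ x c := inner_sub_left _ _ _
    _ = (inner ℂ x (B c) : ℂ) - inner ℂ x c := by
        simp only [hB, ContinuousLinearMap.adjoint_inner_right]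
    _ = 0 := by rw [hBc]; ring
  exact inner_self_eq_zero.mp this
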